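/- Let Q'_F be the boolean FOND problem obtained from a QNP abstraction Q_F by replacing each numeric variable n with proposition (n=0), effects n↑ with deterministic effect ¬(n=0), and effects n↓ with nondeterministic effect (n=0) ∨ ¬(n=0). If no action of Q_F increments any numeric variable (no n↑ effects), then every strong cyclic solution of Q'_F is a terminating solution of Q_F: under the semantics where a variable decremented infinitely often and incremented finitely often eventually becomes zero, every execution of the policy reaches the goal. -/
import Mathlib


inductive NEff
  | inc | dec
deriving DecidableEq

/-- A QNP action: preconditions on boolean variables p and atoms n=0, boolean effects,
and numeric effects n↑ / n↓. -/
structure QAct (PB NV : Type) where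
  preP : PB → Option Bool
  preN : NV → Option Bool      -- condition on the atom n=0
  effP : PB → Option Bool
  effN : NV → Option NEff

/-- Concrete QNP state: boolean values and natural-number values. -/
abbrev QState (PB NV : Type) := (PB → Bool) × (NV → ℕ)

/-- Boolean FOND state: boolean values and truth values of the atoms n=0. -/
abbrev FState (PB NV : Type) := (PB → Bool) × (NV → Bool)

def absQ {PB NV : Type} (σ : QState PB NV) : FState PB NV :=
  (σ.1, fun n => decide (σ.2 n = 0))

def appF {PB NV : Type} (a : QAct PB NV) (β : FState PB NV) : Prop :=
  (∀ p c, a.preP p = some c → β.1 p = c) ∧ (∀ n c, a.preN n = some c → β.2 n = c)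

def appQ {PB NV : Type} (a : QAct PB NV) (σ : QState PB NV) : Prop := appF a (absQ σ)

/-- QNP successor: decrements strictly decrease, increments strictly increase, by
unspecified amounts; untouched variables keep their value. -/
def qsucc {PB NV : Type} (a : QAct PB NV) (σ σ' : QState PB NV) : Prop :=
  (∀ p, σ'.1 p = (a.effP p).getD (σ.1 p)) ∧
  (∀ n, match a.effN n with
    | some NEff.dec => σ'.2 n < σ.2 n
    | some NEff.inc => σ.2 n < σ'.2 n
    | none => σ'.2 n = σ.2 n)

/-- FOND successor in Q'_F: n↓ becomes the nondeterministic effect n=0 | n>0,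
n↑ becomes the deterministic effect n>0. -/
def fsucc {PB NV : Type} (a : QAct PB NV) (β β' : FState PB NV) : Prop :=
  (∀ p, β'.1 p = (a.effP p).getD (β.1 p)) ∧
  (∀ n, match a.effN n with
    | some NEff.dec => True
    | some NEff.inc => β'.2 n = false
    | none => β'.2 n = β.2 n)

def pstep {PB NV : Type} (π : FState PB NV → Option (QAct PB NV))
    (β β' : FState PB NV) : Prop :=
  ∃ a, π β = some a ∧ appF a β ∧ fsucc a β β'

def ReachPi {PB NV : Type} (π : FState PB NV → Option (QAct PB NV))
    (I : FState PB NV → Prop) (β : FState PB NV) : Prop :=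
  ∃ β₀, I β₀ ∧ Relation.ReflTransGen (pstep π) β₀ β

/-- π is a strong cyclic solution of the boolean FOND problem Q'_F: it is closed
(defined and applicable at every reachable non-goal state) and from every reachable
state a goal state is reachable under π. -/
def StrongCyclic {PB NV : Type} (π : FState PB NV → Option (QAct PB NV))
    (I G : FState PB NV → Prop) : Prop :=
  (∀ β, ReachPi π I β → ¬ G β → ∃ a, π β = some a ∧ appF a β) ∧
  (∀ β, ReachPi π I β → ∃ β', Relation.ReflTransGen (pstep π) β β' ∧ G β')

/-- If no action of the QNP Q_F increments any numeric variable, then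
every strong cyclic solution π of the boolean FOND problem Q'_F is a terminating
solution of Q_F: every concrete execution of π from an initial state reaches the goal. -/
theorem stmt15 {PB NV : Type} [Fintype PB] [Fintype NV]
    (A : Set (QAct PB NV)) (I G : FState PB NV → Prop)
    (π : FState PB NV → Option (QAct PB NV))
    (hπA : ∀ β a, π β = some a → a ∈ A)
    (hnoinc : ∀ a ∈ A, ∀ n, a.effN n ≠ some NEff.inc)
    (hsc : StrongCyclic π I G) :
    ∀ σ : ℕ → QState PB NV, I (absQ (σ 0)) →
      (∀ i, (∀ j ≤ i, ¬ G (absQ (σ j))) →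
        ∃ a, π (absQ (σ i)) = some a ∧ appQ a (σ i) ∧ qsucc a (σ i) (σ (i+1))) →
      ∃ n, G (absQ (σ n)) := by
  intro σ hI hstep0
  by_contra hG
  push_neg at hG
  have hstep : ∀ i, ∃ a, π (absQ (σ i)) = some a ∧ appQ a (σ i) ∧ qsucc a (σ i) (σ (i+1)) :=
    fun i => hstep0 i (fun j _ => hG j)
  choose a ha happ hq using hstep
  have hno : ∀ i n, (a i).effN n ≠ some NEff.inc :=
    fun i => hnoinc _ (hπA _ _ (ha i))
  set β : ℕ → FState PB NV := fun i => absQ (σ i) with hβ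
  -- each step is a pstep in the FOND problem
  have hpstep : ∀ i, pstep π (β i) (β (i+1)) := by
    intro i
    refine ⟨a i, ha i, happ i, ?_, ?_⟩
    · intro p; exact (hq i).1 p
    · intro n
      have := (hq i).2 n
      cases he : (a i).effN n with
      | none =>
        simp only [he] at this ⊢
        simp [hβ, absQ, this]
      | some e =>
        cases e with
        | inc => exact absurd he (hno i n)
        | dec => simp [he]
  -- reachability of each β i
  have hreach : ∀ i, ReachPi π I (β i) := by
    intro i
    refine ⟨β 0, hI, ?_⟩
    induction i with
    | zero => exact Relation.ReflTransGen.refl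
    | succ k ih => exact ih.tail (hpstep k)
  -- the sum measure
  set S : ℕ → ℕ := fun i => ∑ n : NV, (σ i).2 n with hS
  have hle : ∀ i m, (σ (i+1)).2 m ≤ (σ i).2 m := by
    intro i m
    have := (hq i).2 m
    cases he : (a i).effN m with
    | none => simp only [he] at this; omega
    | some e =>
      cases e with
      | inc => exact absurd he (hno i m)
      | dec => simp only [he] at this; omega
  have hSle : ∀ i, S (i+1) ≤ S i := by
    intro i
    exact Finset.sum_le_sum (fun m _ => hle i m)
  have hSanti : ∀ i j, i ≤ j → S j ≤ S i := by
    intro i j hij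
    induction j with
    | zero =>
      have : i = 0 := by omega
      subst this; exact le_rfl
    | succ k ih =>
      rcases Nat.lt_or_ge i (k+1) with h | h
      · exact le_trans (hSle k) (ih (by omega))
      · have : i = k + 1 := by omega
        subst this; exact le_rfl
  -- eventually constant
  obtain ⟨N, hN⟩ : ∃ N, S N = sInf (Set.range S) :=
    Nat.sInf_mem (Set.range_nonempty S)
  have hconst : ∀ i, N ≤ i → S i = S N := by
    intro i hi
    have h1 : S i ≤ S N := hSanti N i hi
    have h2 : sInf (Set.range S) ≤ S i := Nat.sInf_le ⟨i, rfl⟩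
    omega
  -- from N on, actions have no numeric effects
  have honly : ∀ i, N ≤ i → ∀ n, (a i).effN n = none := by
    intro i hi n
    cases he : (a i).effN n with
    | none => rfl
    | some e =>
      cases e with
      | inc => exact absurd he (hno i n)
      | dec =>
        exfalso
        have hlt : (σ (i+1)).2 n < (σ i).2 n := by
          have := (hq i).2 n; simp only [he] at this; exact this
        have : S (i+1) < S i :=
          Finset.sum_lt_sum (fun m _ => hle i m) ⟨n, Finset.mem_univ n, hlt⟩
        have e1 := hconst i hi
        have e2 := hconst (i+1) (by omega)
        omega
  -- determinism from N on
  have hdet : ∀ i, N ≤ i → ∀ c, pstep π (β i) c → c = β (i+1) := by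
    intro i hi c hc
    obtain ⟨a', ha', _, hf1, hf2⟩ := hc
    have haa : a' = a i := by
      have := ha i; rw [ha'] at this; exact Option.some_inj.mp this
    subst haa
    have hcf : c.1 = (β (i+1)).1 := by
      funext p
      rw [hf1 p]
      have := (hq i).1 p
      simp [hβ, absQ, this]
    have hc2 : c.2 = (β (i+1)).2 := by
      funext n
      have he := honly i hi n
      have h2 := hf2 n
      simp only [he] at h2
      have hqn := (hq i).2 n
      simp only [he] at hqn
      rw [h2]
      simp [hβ, absQ, hqn]
    exact Prod.ext hcf hc2
  -- any state reachable from β N is some β j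
  have hclose : ∀ c, Relation.ReflTransGen (pstep π) (β N) c → ∃ j, N ≤ j ∧ c = β j := by
    intro c hc
    induction hc with
    | refl => exact ⟨N, le_rfl, rfl⟩
    | tail h1 h2 ih =>
      obtain ⟨j, hj, rfl⟩ := ih
      exact ⟨j+1, by omega, hdet j hj _ h2⟩
  obtain ⟨β', hchain, hGβ'⟩ := hsc.2 (β N) (hreach N)
  obtain ⟨j, _, rfl⟩ := hclose β' hchain
  exact hG j hGβ'
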